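/- Let B be a family of blocks in a monoid M with parameter type Θ, and assume additionally that every block index admits an identity parameter, i.e. for each i there exists e ∈ Θ with B i e = 1. Let n ≥ 1 and r ≥ 1. For any r parameter assignments θ_1, …, θ_r for zigzags of height n, there exists a parameter assignment ψ such that the product L_{1,n}(θ_1) * L_{1,n}(θ_2) * ⋯ * L_{1,n}(θ_r) = T_n(ψ); that is, a product of r zigzags of height n compresses into a single triangle of height n. -/
import Mathlib


/-- The cascade `C_{i,j}(θ) = B i (θ i) * B (i+1) (θ (i+1)) * ⋯ * B j (θ j)`. -/
def cascade {M Θ : Type*} [Monoid M] (B : ℕ → Θ → M) (i j : ℕ) (θ : ℕ → Θ) : M :=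
  ((List.range (j + 1 - i)).map (fun k => B (i + k) (θ (i + k)))).prod

/-- The triangle `T_n(θ) = C_{n,n} * C_{n-1,n} * ⋯ * C_{1,n}`, where the `k`-th cascade
`C_{n-k,n}` carries its own parameters `θ k`. -/
def triangle {M Θ : Type*} [Monoid M] (B : ℕ → Θ → M) (n : ℕ) (θ : ℕ → ℕ → Θ) : M :=
  ((List.range n).map (fun k => cascade B (n - k) n (θ k))).prod

/-- The zigzag `L_{1,n}(θ)`: the product of the odd-indexed blocks `B k (θ k)` for
`1 ≤ k ≤ n` (in increasing order of `k`), followed by the product of the even-indexed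
blocks `B k (θ k)` for `1 ≤ k ≤ n` (in increasing order of `k`). -/
def zigzag {M Θ : Type*} [Monoid M] (B : ℕ → Θ → M) (n : ℕ) (θ : ℕ → Θ) : M :=
  (((((List.range n).map (· + 1)).filter (fun k => k % 2 = 1)).map
      (fun k => B k (θ k))).prod) *
  (((((List.range n).map (· + 1)).filter (fun k => k % 2 = 0)).map
      (fun k => B k (θ k))).prod)

section Aux
variable {M Θ : Type*} [Monoid M] (B : ℕ → Θ → M)

lemma cascade_congr {i j : ℕ} {θ θ' : ℕ → Θ}
    (h : ∀ k, i ≤ k → k ≤ j → θ k = θ' k) :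
    cascade B i j θ = cascade B i j θ' := by
  unfold cascade
  congr 1
  apply List.map_congr_left
  intro k hk
  rw [List.mem_range] at hk
  rw [h (i + k) (Nat.le_add_right _ _) (by omega)]

lemma cascade_split {i j l : ℕ} (h1 : i ≤ j + 1) (h2 : j ≤ l) (θ : ℕ → Θ) :
    cascade B i l θ = cascade B i j θ * cascade B (j + 1) l θ := by
  unfold cascade
  have hadd : l + 1 - i = (j + 1 - i) + (l - j) := by omega
  rw [hadd, List.range_add, List.map_append, List.prod_append, List.map_map]
  have h3 : l + 1 - (j + 1) = l - j := by omega
  simp only [h3]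
  congr 1
  congr 1
  apply List.map_congr_left
  intro k hk
  rw [List.mem_range] at hk
  simp only [Function.comp]
  have : i + (j + 1 - i + k) = j + 1 + k := by omega
  rw [this]

lemma cascade_single (i : ℕ) (θ : ℕ → Θ) : cascade B i i θ = B i (θ i) := by
  simp [cascade, List.range_succ]

lemma commute_cascade (x : M) (i l : ℕ) (θ : ℕ → Θ)
    (h : ∀ k, i ≤ k → k ≤ l → Commute x (B k (θ k))) :
    Commute x (cascade B i l θ) := by
  apply Commute.list_prod_right
  intro y hy
  rw [List.mem_map] at hy
  obtain ⟨k, hk, rfl⟩ := hy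
  rw [List.mem_range] at hk
  exact h _ (by omega) (by omega)

lemma cascade_snoc {j n : ℕ} (hn : 1 ≤ n) (hjn : j ≤ n) (θ : ℕ → Θ) :
    cascade B j n θ = cascade B j (n - 1) θ * B n (θ n) := by
  have h := cascade_split B (i := j) (j := n - 1) (l := n) (by omega) (by omega) θ
  have h2 : n - 1 + 1 = n := by omega
  rw [h2] at h
  rw [h, cascade_single]

lemma cascade_absorb_top
    (hfusion : ∀ (i : ℕ) (α β : Θ), ∃ a : Θ, B i α * B i β = B i a)
    {j n : ℕ} (hn : 1 ≤ n) (hjn : j ≤ n) (θ : ℕ → Θ) (α : Θ) :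
    ∃ θ' : ℕ → Θ, cascade B j n θ * B n α = cascade B j n θ' := by
  obtain ⟨a, ha⟩ := hfusion n (θ n) α
  refine ⟨Function.update θ n a, ?_⟩
  rw [cascade_snoc B hn hjn θ, cascade_snoc B hn hjn (Function.update θ n a),
    Function.update_self, mul_assoc, ha]
  congr 1
  apply cascade_congr
  intro k hk1 hk2
  rw [Function.update_of_ne (by omega)]

lemma cascade_absorb_lt
    (hcomm : ∀ (i j : ℕ), 1 < Nat.dist i j → ∀ (α β : Θ),
      B i α * B j β = B j β * B i α)
    (hturnover : ∀ (i : ℕ) (α β γ : Θ), ∃ a b c : Θ,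
      B i α * B (i + 1) β * B i γ = B (i + 1) a * B i b * B (i + 1) c)
    {j i n : ℕ} (hj : 1 ≤ j) (hji : j ≤ i) (hin : i < n) (θ : ℕ → Θ) (α : Θ) :
    ∃ (a : Θ) (θ' : ℕ → Θ),
      cascade B j n θ * B i α = B (i + 1) a * cascade B j n θ' := by
  obtain ⟨a, b, c, habc⟩ := hturnover i (θ i) (θ (i + 1)) α
  set θ' := Function.update (Function.update θ i b) (i + 1) c with hθ'
  refine ⟨a, θ', ?_⟩
  -- decompose both cascades
  have hdec : ∀ τ : ℕ → Θ, cascade B j n τ =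
      cascade B j (i - 1) τ * (B i (τ i) * (B (i + 1) (τ (i + 1)) * cascade B (i + 2) n τ)) := by
    intro τ
    rw [cascade_split B (j := i + 1) (by omega) (by omega) τ,
      cascade_split B (i := j) (j := i) (by omega) (by omega) τ,
      cascade_snoc B (n := i) (by omega) (by omega) τ, cascade_single]
    simp [mul_assoc]
  have hP1 : cascade B j (i - 1) θ' = cascade B j (i - 1) θ := by
    apply cascade_congr
    intro k hk1 hk2
    rw [hθ', Function.update_of_ne (by omega), Function.update_of_ne (by omega)]
  have hP2 : cascade B (i + 2) n θ' = cascade B (i + 2) n θ := by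
    apply cascade_congr
    intro k hk1 hk2
    rw [hθ', Function.update_of_ne (by omega), Function.update_of_ne (by omega)]
  have hθ'i : θ' i = b := by
    rw [hθ', Function.update_of_ne (by omega), Function.update_self]
  have hθ'i1 : θ' (i + 1) = c := by rw [hθ', Function.update_self]
  have hc1 : Commute (B i α) (cascade B (i + 2) n θ) := by
    apply commute_cascade
    intro k hk1 hk2
    exact (hcomm i k (by simp [Nat.dist]; omega) α (θ k))
  have hc2 : Commute (B (i + 1) a) (cascade B j (i - 1) θ) := by
    apply commute_cascade
    intro k hk1 hk2
    exact (hcomm (i + 1) k (by simp [Nat.dist]; omega) a (θ k))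
  rw [hdec θ, hdec θ', hP1, hP2, hθ'i, hθ'i1]
  have habc' : B i (θ i) * (B (i + 1) (θ (i + 1)) * B i α)
      = B (i + 1) a * (B i b * B (i + 1) c) := by
    rw [← mul_assoc, habc, mul_assoc]
  calc cascade B j (i - 1) θ * (B i (θ i) * (B (i + 1) (θ (i + 1)) * cascade B (i + 2) n θ)) * B i α
      = cascade B j (i - 1) θ * (B i (θ i) * (B (i + 1) (θ (i + 1)) * (cascade B (i + 2) n θ * B i α))) := by
        simp [mul_assoc]
    _ = cascade B j (i - 1) θ * (B i (θ i) * (B (i + 1) (θ (i + 1)) * (B i α * cascade B (i + 2) n θ))) := by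
        rw [← hc1.eq]
    _ = cascade B j (i - 1) θ * ((B i (θ i) * (B (i + 1) (θ (i + 1)) * B i α)) * cascade B (i + 2) n θ) := by
        simp [mul_assoc]
    _ = cascade B j (i - 1) θ * ((B (i + 1) a * (B i b * B (i + 1) c)) * cascade B (i + 2) n θ) := by
        rw [habc']
    _ = (cascade B j (i - 1) θ * B (i + 1) a) * (B i b * (B (i + 1) c * cascade B (i + 2) n θ)) := by
        simp [mul_assoc]
    _ = (B (i + 1) a * cascade B j (i - 1) θ) * (B i b * (B (i + 1) c * cascade B (i + 2) n θ)) := by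
        rw [hc2.eq]
    _ = B (i + 1) a * (cascade B j (i - 1) θ * (B i b * (B (i + 1) c * cascade B (i + 2) n θ))) := by
        simp [mul_assoc]

def triPart (n m : ℕ) (ψ : ℕ → ℕ → Θ) : M :=
  ((List.range m).map (fun k => cascade B (n - k) n (ψ k))).prod

lemma triPart_succ (n m : ℕ) (ψ : ℕ → ℕ → Θ) :
    triPart B n (m + 1) ψ = triPart B n m ψ * cascade B (n - m) n (ψ m) := by
  simp [triPart, List.range_succ]

lemma triPart_congr {n m : ℕ} {ψ ψ' : ℕ → ℕ → Θ} (h : ∀ k, k < m → ψ k = ψ' k) :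
    triPart B n m ψ = triPart B n m ψ' := by
  unfold triPart
  congr 1
  apply List.map_congr_left
  intro k hk
  rw [List.mem_range] at hk
  rw [h k hk]

lemma triPart_absorb
    (hfusion : ∀ (i : ℕ) (α β : Θ), ∃ a : Θ, B i α * B i β = B i a)
    (hcomm : ∀ (i j : ℕ), 1 < Nat.dist i j → ∀ (α β : Θ),
      B i α * B j β = B j β * B i α)
    (hturnover : ∀ (i : ℕ) (α β γ : Θ), ∃ a b c : Θ,
      B i α * B (i + 1) β * B i γ = B (i + 1) a * B i b * B (i + 1) c)
    (n : ℕ) :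
    ∀ m, m ≤ n → ∀ i, n + 1 - m ≤ i → i ≤ n → ∀ (ψ : ℕ → ℕ → Θ) (α : Θ),
      ∃ ψ' : ℕ → ℕ → Θ, triPart B n m ψ * B i α = triPart B n m ψ' := by
  intro m
  induction m with
  | zero => intro _ i h1 h2 _ _; omega
  | succ m ih =>
    intro hm i h1 h2 ψ α
    rcases eq_or_lt_of_le h2 with hi | hi
    · subst hi
      obtain ⟨θ', hθ'⟩ := cascade_absorb_top B hfusion (by omega : 1 ≤ i)
        (by omega : i - m ≤ i) (ψ m) α
      refine ⟨Function.update ψ m θ', ?_⟩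
      have hcg : triPart B i m ψ = triPart B i m (Function.update ψ m θ') := by
        apply triPart_congr
        intro k hk
        rw [Function.update_of_ne (by omega)]
      rw [triPart_succ, mul_assoc, hθ', triPart_succ, Function.update_self, ← hcg]
    · obtain ⟨a, θ', hθ'⟩ := cascade_absorb_lt B hcomm hturnover
        (by omega : 1 ≤ n - m) (by omega : n - m ≤ i) hi (ψ m) α
      obtain ⟨ψ'', hψ''⟩ := ih (by omega) (i + 1) (by omega) (by omega) ψ a
      refine ⟨Function.update ψ'' m θ', ?_⟩
      have hcg : triPart B n m ψ'' = triPart B n m (Function.update ψ'' m θ') := by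
        apply triPart_congr
        intro k hk
        rw [Function.update_of_ne (by omega)]
      rw [triPart_succ, mul_assoc, hθ', ← mul_assoc, hψ'', triPart_succ,
        Function.update_self, ← hcg]

lemma triangle_eq_triPart (n : ℕ) (ψ : ℕ → ℕ → Θ) :
    triangle B n ψ = triPart B n n ψ := rfl

lemma triangle_absorb
    (hfusion : ∀ (i : ℕ) (α β : Θ), ∃ a : Θ, B i α * B i β = B i a)
    (hcomm : ∀ (i j : ℕ), 1 < Nat.dist i j → ∀ (α β : Θ),
      B i α * B j β = B j β * B i α)
    (hturnover : ∀ (i : ℕ) (α β γ : Θ), ∃ a b c : Θ,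
      B i α * B (i + 1) β * B i γ = B (i + 1) a * B i b * B (i + 1) c)
    {n i : ℕ} (h1 : 1 ≤ i) (h2 : i ≤ n) (ψ : ℕ → ℕ → Θ) (α : Θ) :
    ∃ ψ' : ℕ → ℕ → Θ, triangle B n ψ * B i α = triangle B n ψ' := by
  simpa [triangle_eq_triPart] using
    triPart_absorb B hfusion hcomm hturnover n n le_rfl i (by omega) h2 ψ α

lemma triangle_absorb_list
    (hfusion : ∀ (i : ℕ) (α β : Θ), ∃ a : Θ, B i α * B i β = B i a)
    (hcomm : ∀ (i j : ℕ), 1 < Nat.dist i j → ∀ (α β : Θ),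
      B i α * B j β = B j β * B i α)
    (hturnover : ∀ (i : ℕ) (α β γ : Θ), ∃ a b c : Θ,
      B i α * B (i + 1) β * B i γ = B (i + 1) a * B i b * B (i + 1) c)
    (n : ℕ) (θ : ℕ → Θ) :
    ∀ l : List ℕ, (∀ k ∈ l, 1 ≤ k ∧ k ≤ n) → ∀ ψ : ℕ → ℕ → Θ,
      ∃ ψ' : ℕ → ℕ → Θ,
        triangle B n ψ * (l.map (fun k => B k (θ k))).prod = triangle B n ψ' := by
  intro l
  induction l with
  | nil => intro _ ψ; exact ⟨ψ, by simp⟩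
  | cons p t ih =>
    intro hl ψ
    obtain ⟨ψ1, h1⟩ := triangle_absorb B hfusion hcomm hturnover
      (hl p (by simp)).1 (hl p (by simp)).2 ψ (θ p)
    obtain ⟨ψ2, h2⟩ := ih (fun k hk => hl k (by simp [hk])) ψ1
    exact ⟨ψ2, by rw [List.map_cons, List.prod_cons, ← mul_assoc, h1, h2]⟩

lemma zigzag_eq_list_prod (n : ℕ) (θ : ℕ → Θ) :
    zigzag B n θ =
      (((((List.range n).map (· + 1)).filter (fun k => k % 2 = 1)) ++
        (((List.range n).map (· + 1)).filter (fun k => k % 2 = 0))).map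
          (fun k => B k (θ k))).prod := by
  rw [List.map_append, List.prod_append]; rfl

lemma triangle_absorb_zigzag
    (hfusion : ∀ (i : ℕ) (α β : Θ), ∃ a : Θ, B i α * B i β = B i a)
    (hcomm : ∀ (i j : ℕ), 1 < Nat.dist i j → ∀ (α β : Θ),
      B i α * B j β = B j β * B i α)
    (hturnover : ∀ (i : ℕ) (α β γ : Θ), ∃ a b c : Θ,
      B i α * B (i + 1) β * B i γ = B (i + 1) a * B i b * B (i + 1) c)
    (n : ℕ) (θ : ℕ → Θ) (ψ : ℕ → ℕ → Θ) :
    ∃ ψ' : ℕ → ℕ → Θ, triangle B n ψ * zigzag B n θ = triangle B n ψ' := by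
  rw [zigzag_eq_list_prod]
  apply triangle_absorb_list B hfusion hcomm hturnover n θ
  intro k hk
  rw [List.mem_append] at hk
  rcases hk with hk | hk <;>
  · rw [List.mem_filter] at hk
    obtain ⟨m, hm, rfl⟩ := List.mem_map.mp hk.1
    rw [List.mem_range] at hm
    omega

lemma triangle_id_eq_one (hid : ∀ i : ℕ, ∃ e : Θ, B i e = 1) (n : ℕ) :
    triangle B n (fun _ => fun i => (hid i).choose) = 1 := by
  apply List.prod_eq_one
  intro x hx
  obtain ⟨k, _, rfl⟩ := List.mem_map.mp hx
  apply List.prod_eq_one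
  intro y hy
  obtain ⟨m, _, rfl⟩ := List.mem_map.mp hy
  exact (hid _).choose_spec

end Aux

/-- **Corollary (compression for time-dependent Hamiltonians).**  Let `B` be a family of
blocks in a monoid `M` (satisfying fusion, commutation and turnover) such that every block
index admits an identity parameter.  For `n ≥ 1` and `r ≥ 1`, a product of `r` zigzags of
height `n` compresses into a single triangle of height `n`. -/
theorem zigzag_product_compression {M Θ : Type*} [Monoid M] (B : ℕ → Θ → M)
    (hfusion : ∀ (i : ℕ) (α β : Θ), ∃ a : Θ, B i α * B i β = B i a)
    (hcomm : ∀ (i j : ℕ), 1 < Nat.dist i j → ∀ (α β : Θ),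
      B i α * B j β = B j β * B i α)
    (hturnover : ∀ (i : ℕ) (α β γ : Θ), ∃ a b c : Θ,
      B i α * B (i + 1) β * B i γ = B (i + 1) a * B i b * B (i + 1) c)
    (hid : ∀ i : ℕ, ∃ e : Θ, B i e = 1)
    (n r : ℕ) (hn : 1 ≤ n) (hr : 1 ≤ r) :
    ∀ θ : Fin r → ℕ → Θ, ∃ ψ : ℕ → ℕ → Θ,
      (List.ofFn (fun k : Fin r => zigzag B n (θ k))).prod = triangle B n ψ := by
  intro θ
  have key : ∀ (lθ : List (ℕ → Θ)) (ψ0 : ℕ → ℕ → Θ), ∃ ψ : ℕ → ℕ → Θ,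
      triangle B n ψ0 * (lθ.map (zigzag B n)).prod = triangle B n ψ := by
    intro lθ
    induction lθ with
    | nil => intro ψ0; exact ⟨ψ0, by simp⟩
    | cons τ t ih =>
      intro ψ0
      obtain ⟨ψ1, h1⟩ := triangle_absorb_zigzag B hfusion hcomm hturnover n τ ψ0
      obtain ⟨ψ2, h2⟩ := ih ψ1
      exact ⟨ψ2, by rw [List.map_cons, List.prod_cons, ← mul_assoc, h1, h2]⟩
  obtain ⟨ψ, hψ⟩ := key (List.ofFn θ) (fun _ => fun i => (hid i).choose)
  refine ⟨ψ, ?_⟩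
  rw [triangle_id_eq_one B hid n, one_mul] at hψ
  rw [← hψ, List.map_ofFn]
  rfl
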